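/- There exists a Banach space X and a 1-separated set Y contained in the unit sphere S_X, of cardinality 2^ω, such that the distance between any two distinct points of Y is either 1 or 2, and for every uncountable subset Z ⊆ Y there are two distinct points of Z at distance 1 and two distinct points of Z at distance 2. -/
import Mathlib

open Set Cardinal

noncomputable section Stmt10Aux

/-- A subset of ℝ that is well-ordered by `<` is countable. -/
private lemma stmt10_countable_of_isWF {Z : Set ℝ} (h : Z.IsWF) : Z.Countable := by
  classical
  have hS : ∀ x : ℝ, ({z ∈ Z | x < z}).IsWF := fun x => h.mono (fun z hz => hz.1)
  set y : ℝ → ℝ := fun x =>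
    if hx : ({z ∈ Z | x < z}).Nonempty then (hS x).min hx else x + 1 with hy
  have hy1 : ∀ x, ({z ∈ Z | x < z}).Nonempty → x < y x ∧ (∀ z ∈ Z, x < z → y x ≤ z) := by
    intro x hx
    have hmem := (hS x).min_mem hx
    constructor
    · simp only [hy, dif_pos hx]
      exact hmem.2
    · intro z hz hxz
      simp only [hy, dif_pos hx]
      exact not_lt.1 ((hS x).not_lt_min hx ⟨hz, hxz⟩)
  have hT : ({x ∈ Z | ({z ∈ Z | x < z}).Nonempty}).Countable := by
    apply Set.PairwiseDisjoint.countable_of_Ioo (y := y)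
    · intro a ha b hb hab
      rcases lt_or_gt_of_ne hab with hlt | hlt
      · have hyb : y a ≤ b := (hy1 a ha.2).2 b hb.1 hlt
        exact Set.disjoint_left.2 fun u hu hu' =>
          absurd ((hu.2.trans_le hyb).trans hu'.1) (lt_irrefl u)
      · have hyb : y b ≤ a := (hy1 b hb.2).2 a ha.1 hlt
        exact Set.disjoint_left.2 fun u hu hu' =>
          absurd ((hu'.2.trans_le hyb).trans hu.1) (lt_irrefl u)
    · intro x hx; exact (hy1 x hx.2).1
  have hsing : ({x ∈ Z | ∀ z ∈ Z, ¬ x < z}).Subsingleton := by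
    intro a ha b hb
    by_contra hne
    rcases lt_or_gt_of_ne hne with h1 | h1
    · exact ha.2 b hb.1 h1
    · exact hb.2 a ha.1 h1
  refine ((hT.union hsing.countable).mono ?_)
  intro x hx
  by_cases hx' : ({z ∈ Z | x < z}).Nonempty
  · exact Or.inl ⟨hx, hx'⟩
  · exact Or.inr ⟨hx, fun z hz hlt => hx' ⟨z, hz, hlt⟩⟩

/-- A subset of ℝ that is reverse well-ordered is countable. -/
private lemma stmt10_countable_of_wfOn_gt {Z : Set ℝ} (h : Z.WellFoundedOn (· > ·)) :
    Z.Countable := by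
  have key : ((fun x : ℝ => -x) '' Z).IsWF := by
    have hwf : WellFounded fun a b : Z => (a : ℝ) > (b : ℝ) := h
    refine Subrelation.wf ?_ (InvImage.wf (fun n : ((fun x : ℝ => -x) '' Z) =>
      (⟨-(n : ℝ), by obtain ⟨z, hz, hzn⟩ := n.2; simpa [← hzn] using hz⟩ : Z)) hwf)
    intro a b hab
    exact neg_lt_neg hab
  have h1 := stmt10_countable_of_isWF key
  have h2 : Z = (fun x : ℝ => -x) '' ((fun x : ℝ => -x) '' Z) := by
    rw [Set.image_image]; simp
  rw [h2]
  exact h1.image _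

/-- Sierpiński: every uncountable set of reals contains a pair on which the
well-ordering agrees with `<` and a pair on which it disagrees. -/
private lemma stmt10_sierpinski {Z : Set ℝ} (h : ¬ Z.Countable) :
    (∃ a ∈ Z, ∃ b ∈ Z, a < b ∧ WellOrderingRel a b) ∧
    (∃ a ∈ Z, ∃ b ∈ Z, a < b ∧ WellOrderingRel b a) := by
  have hwf : WellFounded (@WellOrderingRel ℝ) := IsWellFounded.wf
  constructor
  · by_contra hc
    push_neg at hc
    apply h
    apply stmt10_countable_of_wfOn_gt
    apply Set.WellFoundedOn.mono' (r := WellOrderingRel) ?_ hwf.wellFoundedOn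
    intro a ha b hb hab
    rcases trichotomous_of WellOrderingRel a b with h' | h' | h'
    · exact h'
    · exact absurd h' (ne_of_gt hab)
    · exact absurd h' (hc b hb a ha hab)
  · by_contra hc
    push_neg at hc
    apply h
    apply stmt10_countable_of_isWF
    apply Set.WellFoundedOn.mono' (r := WellOrderingRel) ?_ hwf.wellFoundedOn
    intro a ha b hb hab
    rcases trichotomous_of WellOrderingRel a b with h' | h' | h'
    · exact h'
    · exact absurd h' (ne_of_lt hab)
    · exact absurd h' (hc a ha b hb hab)

/-- Index type: pairs `(a,b)` with `a < b` but `b` preceding `a` in the well-order. -/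
private def Stmt10Idx : Type := {q : ℝ × ℝ // q.1 < q.2 ∧ WellOrderingRel q.2 q.1}

open Classical in
/-- The coordinates of the point associated to `r`. -/
private def stmt10g (r : ℝ) : Stmt10Idx → ℝ := fun q =>
  if r = q.1.1 then 1 else if r = q.1.2 then -1 else 0

private lemma stmt10g_abs_le (r : ℝ) (q : Stmt10Idx) : |stmt10g r q| ≤ 1 := by
  unfold stmt10g
  split_ifs <;> norm_num

/-- The set of "non-perfect" points: those belonging to some disagreeing pair. -/
private def Stmt10B : Set ℝ :=
  {r | ∃ s, (r < s ∧ WellOrderingRel s r) ∨ (s < r ∧ WellOrderingRel r s)}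

private lemma stmt10B_compl_countable : (Stmt10Bᶜ).Countable := by
  apply stmt10_countable_of_isWF
  have hwf : WellFounded (@WellOrderingRel ℝ) := IsWellFounded.wf
  apply Set.WellFoundedOn.mono' (r := WellOrderingRel) ?_ hwf.wellFoundedOn
  intro a ha b hb hab
  rcases trichotomous_of WellOrderingRel a b with h' | h' | h'
  · exact h'
  · exact absurd h' (ne_of_lt hab)
  · exact absurd ⟨a, Or.inr ⟨hab, h'⟩⟩ hb

/-- The point of `ℓ^∞` associated to `r`. -/
private def stmt10F (r : ℝ) : lp (fun _ : Stmt10Idx => ℝ) ⊤ :=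
  ⟨stmt10g r, memℓp_infty ⟨1, by
    rintro x ⟨q, rfl⟩
    simpa [Real.norm_eq_abs] using stmt10g_abs_le r q⟩⟩

private lemma stmt10F_apply (r : ℝ) (q : Stmt10Idx) : (stmt10F r : ∀ _ : Stmt10Idx, ℝ) q = stmt10g r q := rfl

private lemma stmt10_exists_idx {r : ℝ} (hr : r ∈ Stmt10B) :
    ∃ q : Stmt10Idx, |stmt10g r q| = 1 := by
  obtain ⟨s, hs | hs⟩ := hr
  · refine ⟨⟨(r, s), hs⟩, ?_⟩
    simp [stmt10g]
  · refine ⟨⟨(s, r), hs⟩, ?_⟩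
    have : r ≠ s := ne_of_gt hs.1
    simp [stmt10g, this]

private lemma stmt10_norm_F {r : ℝ} (hr : r ∈ Stmt10B) : ‖stmt10F r‖ = 1 := by
  obtain ⟨q, hq⟩ := stmt10_exists_idx hr
  apply le_antisymm
  · apply lp.norm_le_of_forall_le (by norm_num : (0:ℝ) ≤ 1)
    intro i
    simpa [stmt10F_apply, Real.norm_eq_abs] using stmt10g_abs_le r i
  · have hineq := lp.norm_apply_le_norm (E := fun _ : Stmt10Idx => ℝ)
      ENNReal.top_ne_zero (stmt10F r) q
    refine le_trans (le_of_eq ?_) hineq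
    show (1:ℝ) = ‖stmt10g r q‖
    simp [Real.norm_eq_abs, hq]

private lemma stmt10_norm_sub_eq_two {r s : ℝ}
    (hcol : (r < s ∧ WellOrderingRel s r) ∨ (s < r ∧ WellOrderingRel r s)) :
    ‖stmt10F r - stmt10F s‖ = 2 := by
  have hrs : r ≠ s := by rcases hcol with ⟨h, _⟩ | ⟨h, _⟩; exacts [ne_of_lt h, ne_of_gt h]
  have key : ∃ q : Stmt10Idx, |stmt10g r q - stmt10g s q| = 2 := by
    rcases hcol with hs | hs
    · refine ⟨⟨(r, s), hs⟩, ?_⟩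
      simp [stmt10g, hrs, hrs.symm]
      norm_num
    · refine ⟨⟨(s, r), hs⟩, ?_⟩
      simp [stmt10g, hrs, hrs.symm]
      norm_num
  obtain ⟨q, hq⟩ := key
  apply le_antisymm
  · apply lp.norm_le_of_forall_le (by norm_num : (0:ℝ) ≤ 2)
    intro i
    have h1 := stmt10g_abs_le r i
    have h2 := stmt10g_abs_le s i
    have : |stmt10g r i - stmt10g s i| ≤ 2 := by
      calc |stmt10g r i - stmt10g s i| ≤ |stmt10g r i| + |stmt10g s i| := abs_sub _ _
        _ ≤ 2 := by linarith
    simpa [lp.coeFn_sub, Pi.sub_apply, stmt10F_apply, Real.norm_eq_abs] using this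
  · have hineq := lp.norm_apply_le_norm (E := fun _ : Stmt10Idx => ℝ)
      ENNReal.top_ne_zero (stmt10F r - stmt10F s) q
    refine le_trans (le_of_eq ?_) hineq
    show (2:ℝ) = ‖(⇑(stmt10F r - stmt10F s) : ∀ _ : Stmt10Idx, ℝ) q‖
    rw [lp.coeFn_sub, Pi.sub_apply]
    simp [stmt10F_apply, Real.norm_eq_abs, hq]

private lemma stmt10_norm_sub_eq_one {r s : ℝ} (hr : r ∈ Stmt10B) (hrs : r ≠ s)
    (h1 : ¬(r < s ∧ WellOrderingRel s r)) (h2 : ¬(s < r ∧ WellOrderingRel r s)) :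
    ‖stmt10F r - stmt10F s‖ = 1 := by
  have hub : ∀ q : Stmt10Idx, |stmt10g r q - stmt10g s q| ≤ 1 := by
    rintro ⟨⟨a, b⟩, hab, hba⟩
    simp only at hab hba
    simp only [stmt10g]
    split_ifs
    all_goals try norm_num
    all_goals exfalso
    · rename_i e1 e2 e3
      exact h1 ⟨by rw [e1, e3]; exact hab, by rw [e1, e3]; exact hba⟩
    · rename_i e1 e2 e3
      exact h2 ⟨by rw [e3, e2]; exact hab, by rw [e2, e3]; exact hba⟩
  have key : ∃ q : Stmt10Idx, |stmt10g r q - stmt10g s q| = 1 := by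
    obtain ⟨t, ht | ht⟩ := hr
    · have hts : t ≠ s := fun h => h1 ⟨h ▸ ht.1, h ▸ ht.2⟩
      refine ⟨⟨(r, t), ht⟩, ?_⟩
      simp [stmt10g, hrs.symm, hts.symm]
    · have hts : t ≠ s := fun h => h2 ⟨h ▸ ht.1, h ▸ ht.2⟩
      have hrt : r ≠ t := ne_of_gt ht.1
      refine ⟨⟨(t, r), ht⟩, ?_⟩
      simp [stmt10g, hrs.symm, hts.symm, hrt]
  obtain ⟨q, hq⟩ := key
  apply le_antisymm
  · apply lp.norm_le_of_forall_le (by norm_num : (0:ℝ) ≤ 1)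
    intro i
    simpa [lp.coeFn_sub, Pi.sub_apply, stmt10F_apply, Real.norm_eq_abs] using hub i
  · have hineq := lp.norm_apply_le_norm (E := fun _ : Stmt10Idx => ℝ)
      ENNReal.top_ne_zero (stmt10F r - stmt10F s) q
    refine le_trans (le_of_eq ?_) hineq
    show (1:ℝ) = ‖(⇑(stmt10F r - stmt10F s) : ∀ _ : Stmt10Idx, ℝ) q‖
    rw [lp.coeFn_sub, Pi.sub_apply]
    simp [stmt10F_apply, Real.norm_eq_abs, hq]

private lemma stmt10_dist_cases {r s : ℝ} (hr : r ∈ Stmt10B) (hrs : r ≠ s) :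
    ‖stmt10F r - stmt10F s‖ = 1 ∨ ‖stmt10F r - stmt10F s‖ = 2 := by
  by_cases hcol : (r < s ∧ WellOrderingRel s r) ∨ (s < r ∧ WellOrderingRel r s)
  · exact Or.inr (stmt10_norm_sub_eq_two hcol)
  · rw [not_or] at hcol
    exact Or.inl (stmt10_norm_sub_eq_one hr hrs hcol.1 hcol.2)

private lemma stmt10_injOn : Set.InjOn stmt10F Stmt10B := by
  intro r hr s hs hF
  by_contra hrs
  have := stmt10_dist_cases hr hrs
  rw [hF, sub_self, norm_zero] at this
  rcases this with h | h <;> norm_num at h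

end Stmt10Aux

/- STATEMENT 10: There exist a Banach space `X` and a `1`-separated set `Y` contained
in the unit sphere of `X`, of cardinality `2^ω`, such that all distances between
distinct points of `Y` are `1` or `2`, and every uncountable `Z ⊆ Y` contains two
distinct points at distance `1` and two distinct points at distance `2`. -/
theorem stmt10 :
    ∃ (X : Type) (_ : NormedAddCommGroup X) (_ : NormedSpace ℝ X) (_ : CompleteSpace X)
      (Y : Set X),
      Y ⊆ {x : X | ‖x‖ = 1} ∧
      Cardinal.mk Y = Cardinal.continuum ∧
      (∀ x ∈ Y, ∀ y ∈ Y, x ≠ y → 1 ≤ ‖x - y‖) ∧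
      (∀ x ∈ Y, ∀ y ∈ Y, x ≠ y → ‖x - y‖ = 1 ∨ ‖x - y‖ = 2) ∧
      (∀ Z ⊆ Y, ¬Z.Countable →
        (∃ a ∈ Z, ∃ b ∈ Z, a ≠ b ∧ ‖a - b‖ = 1) ∧
        (∃ a ∈ Z, ∃ b ∈ Z, a ≠ b ∧ ‖a - b‖ = 2)) := by
  classical
  refine ⟨lp (fun _ : Stmt10Idx => ℝ) ⊤, inferInstance, inferInstance, inferInstance,
    stmt10F '' Stmt10B, ?_, ?_, ?_, ?_, ?_⟩
  · rintro _ ⟨r, hr, rfl⟩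
    exact stmt10_norm_F hr
  · rw [Cardinal.mk_image_eq_of_injOn _ _ stmt10_injOn]
    have h1 : Cardinal.mk (↥(Stmt10Bᶜ)) ≤ Cardinal.aleph0 :=
      Cardinal.mk_le_aleph0_iff.2 stmt10B_compl_countable.to_subtype
    have h2 : Cardinal.mk ↥Stmt10B + Cardinal.mk ↥(Stmt10Bᶜ) = Cardinal.continuum := by
      rw [Cardinal.mk_sum_compl, Cardinal.mk_real]
    by_contra hne
    have hle : Cardinal.mk ↥Stmt10B ≤ Cardinal.continuum := by
      rw [← Cardinal.mk_real]; exact Cardinal.mk_set_le _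
    have hlt : Cardinal.mk ↥Stmt10B < Cardinal.continuum := lt_of_le_of_ne hle hne
    exact absurd h2 (ne_of_lt (Cardinal.add_lt_of_lt Cardinal.aleph0_le_continuum hlt
      (h1.trans_lt Cardinal.aleph0_lt_continuum)))
  · rintro _ ⟨r, hr, rfl⟩ _ ⟨s, hs, rfl⟩ hne
    have hrs : r ≠ s := fun h => hne (by rw [h])
    rcases stmt10_dist_cases hr hrs with h | h <;> rw [h] <;> norm_num
  · rintro _ ⟨r, hr, rfl⟩ _ ⟨s, hs, rfl⟩ hne
    exact stmt10_dist_cases hr (fun h => hne (by rw [h]))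
  · intro Z hZY hZc
    have hZeq : stmt10F '' (Stmt10B ∩ stmt10F ⁻¹' Z) = Z := by
      apply Set.Subset.antisymm
      · rintro _ ⟨r, hr, rfl⟩; exact hr.2
      · intro z hz
        obtain ⟨r, hrB, rfl⟩ := hZY hz
        exact ⟨r, ⟨hrB, hz⟩, rfl⟩
    have hZ₀ : ¬ (Stmt10B ∩ stmt10F ⁻¹' Z).Countable := fun hc => hZc (hZeq ▸ hc.image stmt10F)
    obtain ⟨⟨a, ha, b, hb, hab, hw⟩, ⟨c, hc, d, hd, hcd, hw'⟩⟩ := stmt10_sierpinski hZ₀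
    have hwf : WellFounded (@WellOrderingRel ℝ) := IsWellFounded.wf
    constructor
    · refine ⟨stmt10F a, ha.2, stmt10F b, hb.2,
        fun h => (ne_of_lt hab) (stmt10_injOn ha.1 hb.1 h), ?_⟩
      exact stmt10_norm_sub_eq_one ha.1 (ne_of_lt hab)
        (fun h => hwf.asymmetric _ _ hw h.2) (fun h => absurd hab (not_lt.2 h.1.le))
    · refine ⟨stmt10F c, hc.2, stmt10F d, hd.2,
        fun h => (ne_of_lt hcd) (stmt10_injOn hc.1 hd.1 h), ?_⟩
      exact stmt10_norm_sub_eq_two (Or.inl ⟨hcd, hw'⟩)
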